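/- In the setting of higher derived brackets (Lie superalgebra 𝔤, projector P with im P abelian and ker P a subalgebra, odd element Δ), if Δ² = 0 then the derived brackets {a₁,…,aₙ}_Δ := P[···[[Δ,a₁],···],aₙ] endow V = im P with the structure of an L∞-algebra: all higher Jacobi identities Jⁿ = 0 hold. -/

import Mathlib

open scoped Classical

/-- The Koszul sign `(-1)^{pq}` for parities `p q : ZMod 2`. -/
def ksign (p q : ZMod 2) : ℤ := if p = 1 ∧ q = 1 then -1 else 1

/-- A Lie superalgebra over `k`: a `ZMod 2`-graded module with a bilinear bracket
that is graded-antisymmetric and satisfies the graded Jacobi identity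
(on homogeneous elements). -/
structure LieSuper (k G : Type) [Field k] [AddCommGroup G] [Module k G] where
  gr : ZMod 2 → Submodule k G
  br : G →ₗ[k] G →ₗ[k] G
  br_gr : ∀ i j x y, x ∈ gr i → y ∈ gr j → br x y ∈ gr (i + j)
  skew : ∀ i j x y, x ∈ gr i → y ∈ gr j → br x y = -(ksign i j • br y x)
  jacobi : ∀ i j x y z, x ∈ gr i → y ∈ gr j →
    br x (br y z) = br (br x y) z + ksign i j • br y (br x z)

variable {k G : Type} [Field k] [AddCommGroup G] [Module k G]

/-- The `n`-th derived bracket `{a₁,…,aₙ}_D := P[⋯[[D,a₁],a₂],⋯,aₙ]`. -/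
def dbr (L : LieSuper k G) (P : G →ₗ[k] G) (D : G) (l : List G) : G :=
  P (l.foldl (fun x a => L.br x a) D)

/-- `σ` is a `(j, n-j)`-shuffle: strictly monotone on the first `j` positions
and on the last `n - j` positions. -/
def IsShuffle {n : ℕ} (j : ℕ) (σ : Equiv.Perm (Fin n)) : Prop :=
  (∀ s t : Fin n, s < t → (t : ℕ) < j → σ s < σ t) ∧
  (∀ s t : Fin n, s < t → j ≤ (s : ℕ) → σ s < σ t)

/-- The Koszul sign of the permutation `σ` of homogeneous arguments of parities `p`:
the product of `(-1)^{p_i p_j}` over all inversions of `σ`. -/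
noncomputable def koszulSign {n : ℕ} (p : Fin n → ZMod 2) (σ : Equiv.Perm (Fin n)) : ℤ :=
  ∏ q ∈ Finset.univ.filter (fun q : Fin n × Fin n => q.1 < q.2 ∧ σ q.2 < σ q.1),
    ksign (p (σ q.1)) (p (σ q.2))

/-- The `n`-th Jacobiator of the derived brackets of `D`:
`Jⁿ(a₁,…,aₙ) = Σ_{j+l=n} Σ_{(j,l)-shuffles σ} ± {{a_{σ(1)},…,a_{σ(j)}}_D, a_{σ(j+1)},…,a_{σ(n)}}_D`
with Koszul signs. -/
noncomputable def jacobiator (L : LieSuper k G) (P : G →ₗ[k] G) (D : G) {n : ℕ}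
    (p : Fin n → ZMod 2) (a : Fin n → G) : G :=
  ∑ j ∈ Finset.range (n + 1),
    ∑ σ ∈ Finset.univ.filter (fun σ : Equiv.Perm (Fin n) => IsShuffle j σ),
      koszulSign p σ •
        dbr L P D
          (dbr L P D (((List.finRange n).take j).map fun i => a (σ i)) ::
            ((List.finRange n).drop j).map fun i => a (σ i))

namespace Stmt11


lemma ks_comm (p q : ZMod 2) : ksign p q = ksign q p := by revert p q; decide
lemma ks_zero_right (p : ZMod 2) : ksign p 0 = 1 := by revert p; decide
lemma ks_zero_left (p : ZMod 2) : ksign 0 p = 1 := by revert p; decide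
lemma ks_add_right (p q r : ZMod 2) : ksign p (q + r) = ksign p q * ksign p r := by
  revert p q r; decide
lemma ks_add_left (p q r : ZMod 2) : ksign (p + q) r = ksign p r * ksign q r := by
  revert p q r; decide
lemma ks_sq (p q : ZMod 2) : ksign p q * ksign p q = 1 := by revert p q; decide
lemma ks3 (i j q : ZMod 2) : ksign i j * ksign j (i + q) = ksign q j := by revert i j q; decide
lemma ks_add2 (p q r : ZMod 2) : ksign q p * ksign p r = ksign p (q + r) := by
  revert p q r; decide

variable (L : LieSuper k G)

/-- iterated bracket `[[…[x,a₁],a₂…],aₘ]` -/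
def F (x : G) (l : List G) : G := l.foldl (fun u v => L.br u v) x

@[simp] lemma F_nil (x : G) : F L x [] = x := rfl
@[simp] lemma F_cons (x a : G) (l : List G) : F L x (a :: l) = F L (L.br x a) l := rfl

lemma F_zero (l : List G) : F L 0 l = 0 := by
  induction l with
  | nil => rfl
  | cons a l ih => simp only [F_cons, map_zero, LinearMap.zero_apply, ih]

lemma F_add (x y : G) (l : List G) : F L (x + y) l = F L x l + F L y l := by
  induction l generalizing x y with
  | nil => rfl
  | cons a l ih => simp only [F_cons, map_add, LinearMap.add_apply, ih]

lemma F_zsmul (z : ℤ) (x : G) (l : List G) : F L (z • x) l = z • F L x l := by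
  induction l generalizing x with
  | nil => rfl
  | cons a l ih => simp only [F_cons, map_zsmul, LinearMap.smul_apply, ih]

lemma skew' {i j : ZMod 2} {x y : G} (hx : x ∈ L.gr i) (hy : y ∈ L.gr j) :
    L.br x y = (-(ksign i j)) • L.br y x := by
  rw [L.skew i j x y hx hy, neg_smul]

lemma rightLeibniz {i j q : ZMod 2} {x y z : G} (hx : x ∈ L.gr i) (hy : y ∈ L.gr j)
    (hz : z ∈ L.gr q) :
    L.br (L.br x y) z = ksign q j • L.br (L.br x z) y + L.br x (L.br y z) := by
  have J := L.jacobi i j x y z hx hy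
  have h1 : L.br (L.br x y) z = L.br x (L.br y z) - ksign i j • L.br y (L.br x z) := by
    rw [J]; abel
  rw [h1, skew' L hy (L.br_gr i q x z hx hz), smul_smul, mul_neg, ks3 i j q, neg_smul,
    sub_neg_eq_add, add_comm]

/-- lists of homogeneous elements with recorded parities -/
def els (l : List (G × ZMod 2)) : List G := l.map Prod.fst
def psum (l : List (G × ZMod 2)) : ZMod 2 := (l.map Prod.snd).sum
def Good (l : List (G × ZMod 2)) : Prop := ∀ c ∈ l, c.1 ∈ L.gr c.2

@[simp] lemma els_nil : els ([] : List (G × ZMod 2)) = [] := rfl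
@[simp] lemma els_cons (c : G × ZMod 2) (l) : els (c :: l) = c.1 :: els l := rfl
@[simp] lemma psum_nil : psum ([] : List (G × ZMod 2)) = 0 := rfl
@[simp] lemma psum_cons (c : G × ZMod 2) (l) : psum (c :: l) = c.2 + psum l := rfl

lemma F_gr {d : ZMod 2} {x : G} (hx : x ∈ L.gr d) {l : List (G × ZMod 2)} (hl : Good L l) :
    F L x (els l) ∈ L.gr (d + psum l) := by
  induction l generalizing x d with
  | nil => simpa using hx
  | cons c l ih =>
      have h := ih (L.br_gr d c.2 x c.1 hx (hl c (by simp))) (fun e he => hl e (by simp [he]))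
      simpa [add_assoc] using h

lemma moveOut {pb d : ZMod 2} {b x : G} (hb : b ∈ L.gr pb) (hx : x ∈ L.gr d)
    {l : List (G × ZMod 2)} (hl : Good L l) (hcomm : ∀ c ∈ l, L.br b c.1 = 0) :
    F L (L.br x b) (els l) = ksign pb (psum l) • L.br (F L x (els l)) b := by
  induction l generalizing x d with
  | nil => simp [ks_zero_right]
  | cons c l ih =>
      have hcg : c.1 ∈ L.gr c.2 := hl c (by simp)
      have hbr : L.br (L.br x b) c.1 = ksign c.2 pb • L.br (L.br x c.1) b := by
        rw [rightLeibniz L hx hb hcg, hcomm c (by simp), map_zero, add_zero]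
      calc F L (L.br x b) (els (c :: l)) = F L (L.br (L.br x b) c.1) (els l) := rfl
        _ = ksign c.2 pb • F L (L.br (L.br x c.1) b) (els l) := by rw [hbr, F_zsmul]
        _ = ksign c.2 pb • (ksign pb (psum l) • L.br (F L (L.br x c.1) (els l)) b) := by
              rw [ih (L.br_gr d c.2 x c.1 hx hcg) (fun e he => hl e (by simp [he]))
                (fun e he => hcomm e (by simp [he]))]
        _ = ksign pb (psum (c :: l)) • L.br (F L x (els (c :: l))) b := by
              rw [smul_smul, ks_add2, psum_cons]; rfl



set_option linter.unusedSectionVars false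
set_option maxHeartbeats 1000000

def E (n : ℕ) : Fin n ↪ Fin (n + 1) := ⟨Fin.succ, Fin.succ_injective n⟩

@[simp] lemma E_apply {n : ℕ} (i : Fin n) : E n i = Fin.succ i := rfl

def sub {n : ℕ} (c : Fin n → G × ZMod 2) (S : Finset (Fin n)) : List (G × ZMod 2) :=
  ((List.finRange n).filter (fun i => i ∈ S)).map c

noncomputable def Zs {n : ℕ} (py : ZMod 2) (c : Fin n → G × ZMod 2) (S : Finset (Fin n)) : ℤ :=
  ∏ i ∈ S, ksign (c i).2 (py + ∑ j ∈ Sᶜ.filter (fun j => j < i), (c j).2)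

lemma zero_not_mem_map {n : ℕ} (S : Finset (Fin n)) : (0 : Fin (n+1)) ∉ S.map (E n) := by
  simp only [Finset.mem_map, E_apply]
  rintro ⟨a, -, ha⟩
  exact Fin.succ_ne_zero a ha

lemma sub_insert {n : ℕ} (c : Fin (n+1) → G × ZMod 2) (S : Finset (Fin n)) :
    sub c (insert 0 (S.map (E n))) = c 0 :: sub (c ∘ Fin.succ) S := by
  unfold sub
  rw [List.finRange_succ, List.filter_cons_of_pos (by simp), List.filter_map,
    List.map_cons, List.map_map]
  congr 2
  apply List.filter_congr
  intro a _
  simp [Fin.succ_ne_zero, Fin.succ_inj]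

lemma sub_map {n : ℕ} (c : Fin (n+1) → G × ZMod 2) (S : Finset (Fin n)) :
    sub c (S.map (E n)) = sub (c ∘ Fin.succ) S := by
  unfold sub
  rw [List.finRange_succ, List.filter_cons_of_neg (by simpa using zero_not_mem_map S),
    List.filter_map, List.map_map]
  congr 1
  apply List.filter_congr
  intro a _
  simp [Fin.succ_inj]

lemma compl_insert {n : ℕ} (S : Finset (Fin n)) :
    (insert (0 : Fin (n+1)) (S.map (E n)))ᶜ = Sᶜ.map (E n) := by
  ext i
  refine Fin.cases ?_ ?_ i
  · simp [Fin.succ_ne_zero]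
  · intro i'
    simp [Fin.succ_ne_zero, Fin.succ_inj]

lemma compl_map {n : ℕ} (S : Finset (Fin n)) :
    (S.map (E n))ᶜ = insert (0 : Fin (n+1)) (Sᶜ.map (E n)) := by
  ext i
  refine Fin.cases ?_ ?_ i
  · simp [Fin.succ_ne_zero]
  · intro i'
    simp [Fin.succ_ne_zero, Fin.succ_inj]

lemma inner_sum {n : ℕ} (c : Fin (n+1) → G × ZMod 2) (T : Finset (Fin n)) (i : Fin n) :
    ∑ j ∈ (T.map (E n)).filter (fun j => j < Fin.succ i), (c j).2
      = ∑ j ∈ T.filter (fun j => j < i), ((c ∘ Fin.succ) j).2 := by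
  rw [Finset.sum_filter, Finset.sum_map, Finset.sum_filter]
  refine Finset.sum_congr rfl ?_
  intro j _
  simp [Fin.succ_lt_succ_iff]

lemma Zs_insert {n : ℕ} (py : ZMod 2) (c : Fin (n+1) → G × ZMod 2) (S : Finset (Fin n)) :
    Zs py c (insert 0 (S.map (E n))) = ksign (c 0).2 py * Zs py (c ∘ Fin.succ) S := by
  unfold Zs
  rw [Finset.prod_insert (zero_not_mem_map S)]
  congr 1
  · congr 1
    rw [show (((insert (0:Fin (n+1)) (S.map (E n)))ᶜ).filter (fun j => j < 0)) = ∅ from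
      Finset.filter_eq_empty_iff.mpr (fun j _ => Fin.not_lt_zero j), Finset.sum_empty, add_zero]
  · rw [Finset.prod_map]
    refine Finset.prod_congr rfl ?_
    intro i _
    rw [compl_insert, E_apply, inner_sum]
    rfl

lemma Zs_map {n : ℕ} (py : ZMod 2) (c : Fin (n+1) → G × ZMod 2) (S : Finset (Fin n)) :
    Zs py c (S.map (E n)) = Zs (py + (c 0).2) (c ∘ Fin.succ) S := by
  unfold Zs
  rw [Finset.prod_map]
  refine Finset.prod_congr rfl ?_
  intro i _
  rw [compl_map, E_apply]
  have h0 : (0 : Fin (n+1)) < Fin.succ i := Fin.succ_pos i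
  rw [Finset.filter_insert, if_pos h0,
    Finset.sum_insert (fun hmem => zero_not_mem_map Sᶜ (Finset.filter_subset _ _ hmem)),
    inner_sum, ← add_assoc]
  rfl

lemma sum_split {M : Type*} [AddCommMonoid M] {n : ℕ} (f : Finset (Fin (n+1)) → M) :
    ∑ S, f S = (∑ S : Finset (Fin n), f (insert 0 (S.map (E n))))
      + ∑ S : Finset (Fin n), f (S.map (E n)) := by
  rw [← Finset.sum_filter_add_sum_filter_not Finset.univ (fun S => (0 : Fin (n+1)) ∈ S) f]
  congr 1
  · refine (Finset.sum_bij' (fun S _ => insert 0 (S.map (E n)))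
      (fun S _ => (S.erase 0).preimage Fin.succ (Fin.succ_injective n).injOn)
      (fun S _ => by simp) (fun S _ => by simp) ?_ ?_ (fun S _ => rfl)).symm
    · intro S _
      ext i
      simp [Fin.succ_ne_zero, Fin.succ_inj]
    · intro S hS
      rw [Finset.mem_filter] at hS
      ext i
      refine Fin.cases ?_ ?_ i
      · simpa using hS.2
      · intro i'
        simp [Fin.succ_ne_zero, Fin.succ_inj]
  · refine (Finset.sum_bij' (fun S _ => S.map (E n))
      (fun S _ => S.preimage Fin.succ (Fin.succ_injective n).injOn)
      (fun S _ => by simp [Fin.succ_ne_zero]) (fun S _ => by simp) ?_ ?_ (fun S _ => rfl)).symm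
    · intro S _
      ext i
      simp [Fin.succ_inj]
    · intro S hS
      rw [Finset.mem_filter] at hS
      ext i
      refine Fin.cases ?_ ?_ i
      · simp only [Finset.mem_map, Finset.mem_preimage, E_apply]
        constructor
        · rintro ⟨a, -, ha⟩
          exact absurd ha (Fin.succ_ne_zero a)
        · intro h
          exact absurd h hS.2
      · intro i'
        simp [Fin.succ_ne_zero, Fin.succ_inj]

variable (L : LieSuper k G)

theorem leibniz {n : ℕ} (c : Fin n → G × ZMod 2) (hc : ∀ i, (c i).1 ∈ L.gr (c i).2)
    (x y : G) (px py : ZMod 2) (hx : x ∈ L.gr px) (hy : y ∈ L.gr py) :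
    F L (L.br x y) (els ((List.finRange n).map c)) =
      ∑ S : Finset (Fin n),
        Zs py c S • L.br (F L x (els (sub c S))) (F L y (els (sub c Sᶜ))) := by
  induction n generalizing x y px py with
  | zero =>
      have hu : (Finset.univ : Finset (Finset (Fin 0))) = {∅} := rfl
      rw [hu, Finset.sum_singleton]
      simp [Zs, sub, els]
  | succ n ih =>
      have hrange : (List.finRange (n+1)).map c
          = c 0 :: (List.finRange n).map (c ∘ Fin.succ) := by
        rw [List.finRange_succ, List.map_cons, List.map_map]
      rw [hrange, els_cons, F_cons,
        rightLeibniz L hx hy (hc 0), F_add, F_zsmul,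
        ih (c ∘ Fin.succ) (fun i => hc _) (L.br x (c 0).1) y (px + (c 0).2) py
          (L.br_gr _ _ _ _ hx (hc 0)) hy,
        ih (c ∘ Fin.succ) (fun i => hc _) x (L.br y (c 0).1) px (py + (c 0).2) hx
          (L.br_gr _ _ _ _ hy (hc 0)),
        sum_split (fun S => Zs py c S • L.br (F L x (els (sub c S))) (F L y (els (sub c Sᶜ))))]
      congr 1
      · rw [Finset.smul_sum]
        refine Finset.sum_congr rfl ?_
        intro S _
        rw [Zs_insert, sub_insert, compl_insert, sub_map, els_cons, F_cons, smul_smul]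
      · refine Finset.sum_congr rfl ?_
        intro S _
        rw [Zs_map, sub_map, compl_map, sub_insert, els_cons, F_cons]



set_option linter.unusedSectionVars false
set_option maxHeartbeats 1000000

variable {n : ℕ}

lemma card_compl_eq (S : Finset (Fin n)) : Sᶜ.card = n - S.card := by
  rw [Finset.card_compl, Fintype.card_fin]

noncomputable def sfun (S : Finset (Fin n)) (i : Fin n) : Fin n :=
  if h : (i : ℕ) < S.card then S.orderEmbOfFin rfl ⟨i, h⟩
  else Sᶜ.orderEmbOfFin (card_compl_eq S) ⟨(i : ℕ) - S.card, by have := i.isLt; omega⟩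

lemma sfun_lt (S : Finset (Fin n)) (i : Fin n) (h : (i : ℕ) < S.card) :
    sfun S i = S.orderEmbOfFin rfl ⟨i, h⟩ := dif_pos h

lemma sfun_ge (S : Finset (Fin n)) (i : Fin n) (h : ¬ (i : ℕ) < S.card) :
    sfun S i = Sᶜ.orderEmbOfFin (card_compl_eq S) ⟨(i : ℕ) - S.card, by have := i.isLt; omega⟩ :=
  dif_neg h

lemma sfun_mem_iff (S : Finset (Fin n)) (i : Fin n) : sfun S i ∈ S ↔ (i : ℕ) < S.card := by
  by_cases h : (i : ℕ) < S.card
  · simp only [sfun_lt S i h, h, iff_true]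
    exact Finset.orderEmbOfFin_mem S rfl _
  · simp only [sfun_ge S i h, h, iff_false]
    exact Finset.mem_compl.mp (Finset.orderEmbOfFin_mem Sᶜ (card_compl_eq S) _)

lemma sfun_inj (S : Finset (Fin n)) : Function.Injective (sfun S) := by
  intro i i' hii
  by_cases h1 : (i : ℕ) < S.card <;> by_cases h2 : (i' : ℕ) < S.card
  · rw [sfun_lt S i h1, sfun_lt S i' h2] at hii
    have := (S.orderEmbOfFin rfl).injective hii
    exact Fin.ext (by simpa [Fin.mk.injEq] using this)
  · exact absurd ((sfun_mem_iff S i').mp (hii ▸ (sfun_mem_iff S i).mpr h1)) h2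
  · exact absurd ((sfun_mem_iff S i).mp (hii ▸ (sfun_mem_iff S i').mpr h2)) h1
  · rw [sfun_ge S i h1, sfun_ge S i' h2] at hii
    have := (Sᶜ.orderEmbOfFin (card_compl_eq S)).injective hii
    have h3 : (i : ℕ) - S.card = (i' : ℕ) - S.card := by simpa [Fin.mk.injEq] using this
    exact Fin.ext (by omega)

noncomputable def sig (S : Finset (Fin n)) : Equiv.Perm (Fin n) :=
  Equiv.ofBijective (sfun S) (Finite.injective_iff_bijective.mp (sfun_inj S))

lemma sig_apply (S : Finset (Fin n)) (i : Fin n) : sig S i = sfun S i := rfl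

lemma sig_mem_iff (S : Finset (Fin n)) (i : Fin n) : sig S i ∈ S ↔ (i : ℕ) < S.card :=
  sfun_mem_iff S i

lemma sig_shuffle (S : Finset (Fin n)) : IsShuffle S.card (sig S) := by
  constructor
  · intro s t hst ht
    have hs : (s : ℕ) < S.card := lt_trans hst ht
    rw [sig_apply, sig_apply, sfun_lt S s hs, sfun_lt S t ht]
    exact (S.orderEmbOfFin rfl).strictMono (by exact hst)
  · intro s t hst hs
    have ht : ¬ (t : ℕ) < S.card := by omega
    have hs' : ¬ (s : ℕ) < S.card := by omega
    rw [sig_apply, sig_apply, sfun_ge S s hs', sfun_ge S t ht]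
    refine (Sᶜ.orderEmbOfFin (card_compl_eq S)).strictMono ?_
    simp only [Fin.mk_lt_mk]
    omega

lemma filter_nodup (S : Finset (Fin n)) : ((List.finRange n).filter (fun i => i ∈ S)).Nodup :=
  (List.nodup_finRange n).filter _

lemma filter_sorted (S : Finset (Fin n)) :
    ((List.finRange n).filter (fun i => i ∈ S)).Pairwise (· ≤ ·) :=
  ((List.pairwise_lt_finRange n).filter _).imp le_of_lt

lemma sortEq (S : Finset (Fin n)) :
    S.sort (· ≤ ·) = (List.finRange n).filter (fun i => i ∈ S) := by
  have htf : ((List.finRange n).filter (fun i => i ∈ S)).toFinset = S := by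
    ext i
    simp [List.mem_filter]
  conv_lhs => rw [← htf]
  exact (List.toFinset_sort (· ≤ ·) (filter_nodup S)).mpr (filter_sorted S)

lemma filter_length (S : Finset (Fin n)) :
    ((List.finRange n).filter (fun i => i ∈ S)).length = S.card := by
  rw [← sortEq, Finset.length_sort]

lemma sfun_lt_getElem (S : Finset (Fin n)) (i : Fin n) (h : (i : ℕ) < S.card) :
    sfun S i = ((List.finRange n).filter (fun i => i ∈ S))[(i : ℕ)]'(by
      rw [filter_length]; exact h) := by
  rw [sfun_lt S i h, Finset.orderEmbOfFin_apply]
  simp only [Fin.getElem_fin]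
  congr 1
  exact sortEq S

lemma take_map (S : Finset (Fin n)) (g : Fin n → G) :
    ((List.finRange n).take S.card).map (fun i => g (sig S i)) =
      ((List.finRange n).filter (fun i => i ∈ S)).map g := by
  have hcard : S.card ≤ n := by
    simpa [Fintype.card_fin] using Finset.card_le_univ S
  apply List.ext_getElem
  · simp [filter_length, hcard]
  · intro m h1 h2
    simp only [List.getElem_map, List.getElem_take, List.getElem_finRange]
    have hm : m < S.card := by simpa [filter_length, hcard] using h2
    rw [sig_apply]
    have : ((⟨m, by omega⟩ : Fin n) : ℕ) = m := rfl
    rw [sfun_lt_getElem S _ (by simpa [this] using hm)]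
    simp

lemma sfun_ge_getElem (S : Finset (Fin n)) (i : Fin n) (h : ¬ (i : ℕ) < S.card) :
    sfun S i = ((List.finRange n).filter (fun j => j ∈ Sᶜ))[(i : ℕ) - S.card]'(by
      rw [filter_length, card_compl_eq]; have := i.isLt; omega) := by
  rw [sfun_ge S i h, Finset.orderEmbOfFin_apply]
  simp only [Fin.getElem_fin]
  congr 1
  exact sortEq Sᶜ

lemma drop_map (S : Finset (Fin n)) (g : Fin n → G) :
    ((List.finRange n).drop S.card).map (fun i => g (sig S i)) =
      ((List.finRange n).filter (fun i => i ∈ Sᶜ)).map g := by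
  have hcard : S.card ≤ n := by
    simpa [Fintype.card_fin] using Finset.card_le_univ S
  apply List.ext_getElem
  · simp only [List.length_map, List.length_drop, List.length_finRange, filter_length,
      card_compl_eq]
  · intro m h1 h2
    simp only [List.length_map, filter_length, card_compl_eq] at h2
    simp only [List.getElem_map, List.getElem_drop]
    have hco : (((List.finRange n)[S.card + m]'(by simp; omega)) : ℕ) = S.card + m := by
      simp [List.getElem_finRange]
    rw [sig_apply, sfun_ge_getElem S _ (by rw [hco]; omega)]
    congr 1
    simp only [hco]
    congr 1
    omega

lemma koszul_prod (p : Fin n → ZMod 2) (S : Finset (Fin n)) :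
    koszulSign p (sig S) =
      ∏ x ∈ (S ×ˢ Sᶜ).filter (fun x => x.2 < x.1), ksign (p x.1) (p x.2) := by
  unfold koszulSign
  refine Finset.prod_bij' (fun q _ => (sig S q.1, sig S q.2))
    (fun q _ => ((sig S).symm q.1, (sig S).symm q.2)) ?_ ?_ ?_ ?_ ?_
  · intro q hq
    rw [Finset.mem_filter] at hq
    obtain ⟨-, h12, hinv⟩ := hq
    have hA : ¬ ((sig S) q.1 < (sig S) q.2) := lt_asymm hinv
    by_cases hc1 : (q.1 : ℕ) < S.card
    · by_cases hc2 : (q.2 : ℕ) < S.card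
      · exact absurd ((sig_shuffle S).1 q.1 q.2 h12 hc2) hA
      · rw [Finset.mem_filter, Finset.mem_product]
        exact ⟨⟨(sig_mem_iff S q.1).mpr hc1,
          Finset.mem_compl.mpr (fun hm => hc2 ((sig_mem_iff S q.2).mp hm))⟩, hinv⟩
    · exact absurd ((sig_shuffle S).2 q.1 q.2 h12 (by omega)) hA
  · intro x hx
    rw [Finset.mem_filter, Finset.mem_product] at hx
    obtain ⟨⟨hu, hv⟩, hvu⟩ := hx
    rw [Finset.mem_filter]
    dsimp only
    refine ⟨Finset.mem_univ _, ?_, ?_⟩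
    · have h1 : ((sig S).symm x.1 : ℕ) < S.card := by
        rw [← sig_mem_iff S ((sig S).symm x.1), Equiv.apply_symm_apply]; exact hu
      have h2 : ¬ ((sig S).symm x.2 : ℕ) < S.card := by
        rw [← sig_mem_iff S ((sig S).symm x.2), Equiv.apply_symm_apply]
        exact fun hm => (Finset.mem_compl.mp hv) hm
      rw [Fin.lt_def]
      omega
    · rw [Equiv.apply_symm_apply, Equiv.apply_symm_apply]
      exact hvu
  · intro q _
    simp
  · intro x _
    simp
  · intro q _
    rfl




set_option linter.unusedSectionVars false
set_option maxHeartbeats 1600000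

variable {n : ℕ}

def Bset (n j : ℕ) : Finset (Fin n) := Finset.univ.filter (fun i => (i : ℕ) < j)

lemma mem_Bset {j : ℕ} {i : Fin n} : i ∈ Bset n j ↔ (i : ℕ) < j := by simp [Bset]

lemma Bset_card {j : ℕ} (hj : j ≤ n) : (Bset n j).card = j := by
  rw [show Bset n j = (Finset.range j).attachFin
      (fun m hm => lt_of_lt_of_le (Finset.mem_range.mp hm) hj) from ?_,
    Finset.card_attachFin, Finset.card_range]
  ext i
  simp [Bset, Finset.mem_attachFin]

lemma card_le (S : Finset (Fin n)) : S.card ≤ n := by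
  simpa [Fintype.card_fin] using Finset.card_le_univ S

lemma image_block (S : Finset (Fin n)) (σ : Equiv.Perm (Fin n))
    (himg : ∀ i : Fin n, (i : ℕ) < S.card → σ i ∈ S) : (Bset n S.card).image σ = S := by
  apply Finset.eq_of_subset_of_card_le
  · intro x hx
    rw [Finset.mem_image] at hx
    obtain ⟨i, hi, rfl⟩ := hx
    exact himg i (mem_Bset.mp hi)
  · rw [Finset.card_image_of_injective _ σ.injective, Bset_card (card_le S)]

lemma eq_sig (S : Finset (Fin n)) (σ : Equiv.Perm (Fin n)) (hσ : IsShuffle S.card σ)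
    (himg : ∀ i : Fin n, (i : ℕ) < S.card → σ i ∈ S) : σ = sig S := by
  have hT := image_block S σ himg
  refine Equiv.ext fun i => ?_
  by_cases hi : (i : ℕ) < S.card
  · have hmono : StrictMono
        (fun m : Fin S.card => σ (⟨(m : ℕ), lt_of_lt_of_le m.2 (card_le S)⟩ : Fin n)) := by
      intro m m' hmm
      exact hσ.1 _ _ (by simpa [Fin.mk_lt_mk] using hmm) m'.2
    have hf := Finset.orderEmbOfFin_unique (rfl : S.card = S.card)
      (fun m => himg _ m.2) hmono
    have h2 := congrFun hf ⟨(i : ℕ), hi⟩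
    calc σ i = σ ⟨(i : ℕ), lt_of_lt_of_le hi (card_le S)⟩ := rfl
      _ = S.orderEmbOfFin rfl ⟨(i : ℕ), hi⟩ := h2
      _ = sig S i := (sfun_lt S i hi).symm
  · have hmono : StrictMono
        (fun m : Fin (n - S.card) => σ (⟨S.card + (m : ℕ), by have := m.2; omega⟩ : Fin n)) := by
      intro m m' hmm
      refine hσ.2 _ _ (by simp only [Fin.mk_lt_mk]; omega) (by simp)
    have hmem : ∀ m : Fin (n - S.card),
        σ (⟨S.card + (m : ℕ), by have := m.2; omega⟩ : Fin n) ∈ Sᶜ := by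
      intro m
      rw [Finset.mem_compl]
      intro hmem
      have hmem' : σ (⟨S.card + (m : ℕ), by have := m.2; omega⟩ : Fin n)
          ∈ (Bset n S.card).image σ := by rw [hT]; exact hmem
      rw [Finset.mem_image] at hmem'
      obtain ⟨i', hi', heq⟩ := hmem'
      have hii := σ.injective heq
      rw [mem_Bset] at hi'
      have : (i' : ℕ) = S.card + (m : ℕ) := by rw [hii]
      omega
    have hf := Finset.orderEmbOfFin_unique (card_compl_eq S) hmem hmono
    have h2 := congrFun hf ⟨(i : ℕ) - S.card, by have := i.isLt; omega⟩
    calc σ i = σ ⟨S.card + ((i : ℕ) - S.card), by have := i.isLt; omega⟩ := by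
          congr 1; exact Fin.ext (by simp; omega)
      _ = Sᶜ.orderEmbOfFin (card_compl_eq S) ⟨(i : ℕ) - S.card, _⟩ := h2
      _ = sig S i := (sfun_ge S i hi).symm

lemma jac_sum (L : LieSuper k G) (P : G →ₗ[k] G) (D : G) (p : Fin n → ZMod 2) (a : Fin n → G) :
    jacobiator L P D p a = ∑ S : Finset (Fin n), koszulSign p (sig S) •
      dbr L P D (dbr L P D (((List.finRange n).filter (fun i => i ∈ S)).map a) ::
        ((List.finRange n).filter (fun i => i ∈ Sᶜ)).map a) := by
  unfold jacobiator
  rw [← Finset.sum_fiberwise_of_maps_to (t := Finset.range (n+1))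
    (g := fun S : Finset (Fin n) => S.card)
    (fun S _ => Finset.mem_range.mpr (Nat.lt_succ_of_le (card_le S)))
    (fun S : Finset (Fin n) => koszulSign p (sig S) •
      dbr L P D (dbr L P D (((List.finRange n).filter (fun i => i ∈ S)).map a) ::
        ((List.finRange n).filter (fun i => i ∈ Sᶜ)).map a))]
  refine Finset.sum_congr rfl ?_
  intro j hj
  have hjn : j ≤ n := Nat.lt_succ_iff.mp (Finset.mem_range.mp hj)
  refine Finset.sum_bij' (fun σ _ => (Bset n j).image σ) (fun S _ => sig S) ?_ ?_ ?_ ?_ ?_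
  · intro σ hσ
    rw [Finset.mem_filter]
    exact ⟨Finset.mem_univ _,
      by rw [Finset.card_image_of_injective _ σ.injective, Bset_card hjn]⟩
  · intro S hS
    rw [Finset.mem_filter] at hS
    rw [Finset.mem_filter]
    refine ⟨Finset.mem_univ _, ?_⟩
    rw [← hS.2]
    exact sig_shuffle S
  · intro σ hσ
    rw [Finset.mem_filter] at hσ
    set S' := (Bset n j).image σ with hS'
    have hcard : S'.card = j := by
      rw [hS', Finset.card_image_of_injective _ σ.injective, Bset_card hjn]
    exact (eq_sig S' σ (by rw [hcard]; exact hσ.2)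
      (fun i hi => Finset.mem_image_of_mem σ (mem_Bset.mpr (by omega)))).symm
  · intro S hS
    rw [Finset.mem_filter] at hS
    rw [← hS.2]
    exact image_block S (sig S) (fun i hi => (sig_mem_iff S i).mpr hi)
  · intro σ hσ
    rw [Finset.mem_filter] at hσ
    set S' := (Bset n j).image σ with hS'
    have hcard : S'.card = j := by
      rw [hS', Finset.card_image_of_injective _ σ.injective, Bset_card hjn]
    have hσeq : σ = sig S' := eq_sig S' σ (by rw [hcard]; exact hσ.2)
      (fun i hi => Finset.mem_image_of_mem σ (mem_Bset.mpr (by omega)))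
    rw [hσeq, ← hcard, take_map S' a, drop_map S' a]



set_option linter.unusedSectionVars false
set_option maxHeartbeats 1600000

variable {n : ℕ}

lemma ksign_sum_right {ι : Type*} (x : ZMod 2) (T : Finset ι) (g : ι → ZMod 2) :
    ksign x (∑ j ∈ T, g j) = ∏ j ∈ T, ksign x (g j) := by
  induction T using Finset.cons_induction with
  | empty => simp [ks_zero_right]
  | cons a T ha ih => rw [Finset.sum_cons, Finset.prod_cons, ks_add_right, ih]

lemma ksign_sum_left {ι : Type*} (T : Finset ι) (g : ι → ZMod 2) (x : ZMod 2) :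
    ksign (∑ j ∈ T, g j) x = ∏ j ∈ T, ksign (g j) x := by
  induction T using Finset.cons_induction with
  | empty => simp [ks_zero_left]
  | cons a T ha ih => rw [Finset.sum_cons, Finset.prod_cons, ks_add_left, ih]

lemma prod_pair (h : Fin n → Fin n → ℤ) (S T : Finset (Fin n)) :
    (∏ i ∈ S, ∏ j ∈ T.filter (fun j => j < i), h i j)
      = ∏ x ∈ (S ×ˢ T).filter (fun x => x.2 < x.1), h x.1 x.2 := by
  rw [Finset.prod_filter, Finset.prod_product]
  refine Finset.prod_congr rfl fun i _ => ?_
  rw [Finset.prod_filter]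

noncomputable def Asgn (p : Fin n → ZMod 2) (S : Finset (Fin n)) : ℤ :=
  ∏ x ∈ (S ×ˢ Sᶜ).filter (fun x => x.2 < x.1), ksign (p x.1) (p x.2)

lemma Asgn_sq (p : Fin n → ZMod 2) (S : Finset (Fin n)) : Asgn p S * Asgn p S = 1 := by
  unfold Asgn
  rw [← Finset.prod_mul_distrib]
  exact Finset.prod_eq_one fun x _ => ks_sq _ _

lemma Zs_eq (p : Fin n → ZMod 2) (a : Fin n → G) (S : Finset (Fin n)) :
    Zs 1 (fun i => (a i, p i)) S = ksign (∑ i ∈ S, p i) 1 * Asgn p S := by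
  unfold Zs Asgn
  calc ∏ i ∈ S, ksign ((fun i => (a i, p i)) i).2
        (1 + ∑ j ∈ Sᶜ.filter (fun j => j < i), ((fun i => (a i, p i)) j).2)
      = ∏ i ∈ S, (ksign (p i) 1 * ∏ j ∈ Sᶜ.filter (fun j => j < i), ksign (p i) (p j)) := by
        refine Finset.prod_congr rfl fun i _ => ?_
        rw [show ((fun i => (a i, p i)) i).2 = p i from rfl, ks_add_right, ksign_sum_right]
    _ = (∏ i ∈ S, ksign (p i) 1) *
          ∏ i ∈ S, ∏ j ∈ Sᶜ.filter (fun j => j < i), ksign (p i) (p j) := by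
        rw [Finset.prod_mul_distrib]
    _ = ksign (∑ i ∈ S, p i) 1 *
          ∏ x ∈ (S ×ˢ Sᶜ).filter (fun x => x.2 < x.1), ksign (p x.1) (p x.2) := by
        rw [← ksign_sum_left, prod_pair]

lemma Asgn_mul_compl (p : Fin n → ZMod 2) (S : Finset (Fin n)) :
    Asgn p S * Asgn p Sᶜ = ksign (∑ i ∈ S, p i) (∑ i ∈ Sᶜ, p i) := by
  have hswap : Asgn p Sᶜ
      = ∏ x ∈ (S ×ˢ Sᶜ).filter (fun x => x.1 < x.2), ksign (p x.1) (p x.2) := by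
    unfold Asgn
    rw [compl_compl]
    refine Finset.prod_bij' (fun x _ => (x.2, x.1)) (fun x _ => (x.2, x.1)) ?_ ?_ ?_ ?_ ?_
    · intro x hx
      rw [Finset.mem_filter, Finset.mem_product] at hx ⊢
      exact ⟨⟨hx.1.2, hx.1.1⟩, hx.2⟩
    · intro x hx
      rw [Finset.mem_filter, Finset.mem_product] at hx ⊢
      exact ⟨⟨hx.1.2, hx.1.1⟩, hx.2⟩
    · intro x _; rfl
    · intro x _; rfl
    · intro x _
      exact ks_comm _ _
  rw [hswap]
  have hcong : (S ×ˢ Sᶜ).filter (fun x => x.1 < x.2)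
      = (S ×ˢ Sᶜ).filter (fun x => ¬ x.2 < x.1) := by
    apply Finset.filter_congr
    intro x hx
    rw [Finset.mem_product] at hx
    have hne : x.1 ≠ x.2 := fun h => (Finset.mem_compl.mp hx.2) (h ▸ hx.1)
    constructor
    · intro h; exact lt_asymm h
    · intro h
      rcases lt_or_gt_of_ne hne with h1 | h1
      · exact h1
      · exact absurd h1 h
  rw [hcong]
  unfold Asgn
  rw [Finset.prod_filter_mul_prod_filter_not, Finset.prod_product]
  rw [ksign_sum_left]
  refine Finset.prod_congr rfl fun i _ => ?_
  rw [ksign_sum_right]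

lemma ks_I : ∀ s t : ZMod 2, ksign (1 + s) t * (-(ksign (1 + t) (1 + s))) = ksign s 1 := by
  decide

lemma ks_III : ∀ s t : ZMod 2,
    ksign t 1 * ksign s t * (-(ksign (1 + t) (1 + s))) = ksign s 1 := by decide

lemma sign_I (p : Fin n → ZMod 2) (a : Fin n → G) (S : Finset (Fin n)) :
    koszulSign p (sig S) * ksign (1 + ∑ i ∈ S, p i) (∑ i ∈ Sᶜ, p i)
      * (-(ksign (1 + ∑ i ∈ Sᶜ, p i) (1 + ∑ i ∈ S, p i)))
      = Zs 1 (fun i => (a i, p i)) S := by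
  rw [koszul_prod, Zs_eq p a S]
  show Asgn p S * _ * _ = _
  calc Asgn p S * ksign (1 + ∑ i ∈ S, p i) (∑ i ∈ Sᶜ, p i)
        * (-(ksign (1 + ∑ i ∈ Sᶜ, p i) (1 + ∑ i ∈ S, p i)))
      = ksign (1 + ∑ i ∈ S, p i) (∑ i ∈ Sᶜ, p i)
          * (-(ksign (1 + ∑ i ∈ Sᶜ, p i) (1 + ∑ i ∈ S, p i))) * Asgn p S := by ring
    _ = ksign (∑ i ∈ S, p i) 1 * Asgn p S := by rw [ks_I]

lemma sign_III (p : Fin n → ZMod 2) (a : Fin n → G) (S : Finset (Fin n)) :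
    Zs 1 (fun i => (a i, p i)) Sᶜ * (-(ksign (1 + ∑ i ∈ Sᶜ, p i) (1 + ∑ i ∈ S, p i)))
      = Zs 1 (fun i => (a i, p i)) S := by
  rw [Zs_eq p a Sᶜ, Zs_eq p a S]
  have hAc : Asgn p Sᶜ = Asgn p S * ksign (∑ i ∈ S, p i) (∑ i ∈ Sᶜ, p i) := by
    have h1 := Asgn_mul_compl p S
    calc Asgn p Sᶜ = Asgn p S * Asgn p S * Asgn p Sᶜ := by rw [Asgn_sq, one_mul]
      _ = Asgn p S * (Asgn p S * Asgn p Sᶜ) := by ring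
      _ = Asgn p S * ksign (∑ i ∈ S, p i) (∑ i ∈ Sᶜ, p i) := by rw [h1]
  rw [hAc]
  calc ksign (∑ i ∈ Sᶜ, p i) 1 * (Asgn p S * ksign (∑ i ∈ S, p i) (∑ i ∈ Sᶜ, p i))
      * (-(ksign (1 + ∑ i ∈ Sᶜ, p i) (1 + ∑ i ∈ S, p i)))
      = ksign (∑ i ∈ Sᶜ, p i) 1 * ksign (∑ i ∈ S, p i) (∑ i ∈ Sᶜ, p i)
        * (-(ksign (1 + ∑ i ∈ Sᶜ, p i) (1 + ∑ i ∈ S, p i))) * Asgn p S := by ring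
    _ = ksign (∑ i ∈ S, p i) 1 * Asgn p S := by rw [ks_III]

lemma filter_map_sum {M : Type*} [AddCommMonoid M] (S : Finset (Fin n)) (g : Fin n → M) :
    (((List.finRange n).filter (fun i => i ∈ S)).map g).sum = ∑ i ∈ S, g i := by
  rw [← sortEq]
  change _ = Multiset.sum (Multiset.map g S.val)
  rw [← Finset.sort_eq S (· ≤ ·)]
  rfl


end Stmt11

open Stmt11 in
/-- In the higher derived brackets setting, if `[Δ,Δ] = 0` then the
derived brackets of `Δ` endow `V = im P` with an `L∞`-algebra structure: all higher
Jacobi identities `Jⁿ = 0` hold. -/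
theorem stmt11 [CharZero k] (L : LieSuper k G) (P : G →ₗ[k] G)
    (hP : ∀ x, P (P x) = P x)
    (hPgr : ∀ (i : ZMod 2) (x : G), x ∈ L.gr i → P x ∈ L.gr i)
    (hker : ∀ x y, P x = 0 → P y = 0 → P (L.br x y) = 0)
    (habel : ∀ x y, L.br (P x) (P y) = 0)
    (D : G) (hD : D ∈ L.gr 1) (hD2 : L.br D D = 0)
    (n : ℕ) (p : Fin n → ZMod 2) (a : Fin n → G)
    (ha : ∀ i, a i ∈ L.gr (p i) ∧ P (a i) = a i) :
    jacobiator L P D p a = 0 := by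
  classical
  set c : Fin n → G × ZMod 2 := fun i => (a i, p i) with hcdef
  have hcgr : ∀ i, (c i).1 ∈ L.gr (c i).2 := fun i => (ha i).1
  have hgood : ∀ S : Finset (Fin n), Good L (sub c S) := by
    intro S e he
    unfold sub at he
    obtain ⟨i, -, rfl⟩ := List.mem_map.mp he
    exact hcgr i
  have hpsum : ∀ S : Finset (Fin n), psum (sub c S) = ∑ i ∈ S, p i := by
    intro S
    unfold psum sub
    rw [List.map_map]
    exact filter_map_sum S (fun i => p i)
  have hels : ∀ S : Finset (Fin n),
      ((List.finRange n).filter (fun i => i ∈ S)).map a = els (sub c S) := by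
    intro S
    unfold els sub
    rw [List.map_map]
    rfl
  set X : Finset (Fin n) → G := fun S => F L D (els (sub c S)) with hXdef
  have hXgr : ∀ S, X S ∈ L.gr (1 + ∑ i ∈ S, p i) := by
    intro S
    rw [hXdef]
    have h := F_gr L hD (hgood S)
    rwa [hpsum S] at h
  set u : Finset (Fin n) → G := fun S => P (X S) with hudef
  set v : Finset (Fin n) → G := fun S => X S - u S with hvdef
  have hugr : ∀ S, u S ∈ L.gr (1 + ∑ i ∈ S, p i) := fun S => hPgr _ _ (hXgr S)
  have hvgr : ∀ S, v S ∈ L.gr (1 + ∑ i ∈ S, p i) := fun S =>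
    Submodule.sub_mem _ (hXgr S) (hugr S)
  have hPv : ∀ S, P (v S) = 0 := by
    intro S
    show P (X S - u S) = 0
    rw [map_sub]
    show P (X S) - P (P (X S)) = 0
    rw [hP (X S), sub_self]
  have hXuv : ∀ S, X S = u S + v S := by
    intro S
    show X S = u S + (X S - u S)
    abel
  have hcomm : ∀ S : Finset (Fin n), ∀ e ∈ sub c Sᶜ, L.br (u S) e.1 = 0 := by
    intro S e he
    unfold sub at he
    obtain ⟨i, -, rfl⟩ := List.mem_map.mp he
    show L.br (u S) (c i).1 = 0
    have h1 : (c i).1 = a i := rfl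
    rw [h1, ← (ha i).2]
    exact habel (X S) (a i)
  have hA : jacobiator L P D p a
      = ∑ S : Finset (Fin n), Zs 1 c S • P (L.br (u S) (v Sᶜ)) := by
    rw [jac_sum L P D p a]
    refine Finset.sum_congr rfl fun S _ => ?_
    rw [hels S, hels Sᶜ]
    have h1 : dbr L P D (els (sub c S)) = u S := rfl
    have h2 : dbr L P D (u S :: els (sub c Sᶜ))
        = P (F L (L.br D (u S)) (els (sub c Sᶜ))) := rfl
    rw [h1, h2,
      moveOut L (hugr S) hD (hgood Sᶜ) (hcomm S), hpsum Sᶜ, map_zsmul, smul_smul]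
    have h3 : F L D (els (sub c Sᶜ)) = X Sᶜ := rfl
    rw [h3]
    have h4 : L.br (X Sᶜ) (u S) = L.br (v Sᶜ) (u S) := by
      have hX' : X Sᶜ = u Sᶜ + v Sᶜ := hXuv Sᶜ
      have hma : L.br (u Sᶜ + v Sᶜ) = L.br (u Sᶜ) + L.br (v Sᶜ) := map_add _ _ _
      have h0 : L.br (u Sᶜ) (u S) = 0 := habel (X Sᶜ) (X S)
      rw [hX', hma, LinearMap.add_apply, h0, zero_add]
    rw [h4, skew' L (hvgr Sᶜ) (hugr S), map_zsmul, smul_smul]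
    congr 1
    rw [hcdef]
    exact sign_I p a S
  have hB : jacobiator L P D p a
      = ∑ S : Finset (Fin n), Zs 1 c S • P (L.br (v S) (u Sᶜ)) := by
    rw [hA, ← Equiv.sum_comp
      (Function.Involutive.toPerm _ (fun S : Finset (Fin n) => compl_compl S))
      (fun S => Zs 1 c S • P (L.br (u S) (v Sᶜ)))]
    refine Finset.sum_congr rfl fun S _ => ?_
    show Zs 1 c Sᶜ • P (L.br (u Sᶜ) (v Sᶜᶜ)) = _
    rw [compl_compl, skew' L (hugr Sᶜ) (hvgr S), map_zsmul, smul_smul]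
    congr 1
    rw [hcdef]
    exact sign_III p a S
  have hC : (0 : G) = ∑ S : Finset (Fin n), Zs 1 c S •
      (P (L.br (u S) (v Sᶜ)) + P (L.br (v S) (u Sᶜ))) := by
    have hle := leibniz L c hcgr D D 1 1 hD hD
    rw [hD2, F_zero] at hle
    have h0 : (0 : G) = ∑ S : Finset (Fin n), Zs 1 c S • P (L.br (X S) (X Sᶜ)) := by
      calc (0:G) = P 0 := (map_zero P).symm
        _ = P (∑ S : Finset (Fin n), Zs 1 c S •
              L.br (F L D (els (sub c S))) (F L D (els (sub c Sᶜ)))) := by rw [← hle]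
        _ = _ := by
            rw [map_sum]
            refine Finset.sum_congr rfl fun S _ => ?_
            rw [map_zsmul]
    rw [h0]
    refine Finset.sum_congr rfl fun S _ => ?_
    congr 1
    have e1 : L.br (u S) (u Sᶜ) = 0 := habel _ _
    have e4 : P (L.br (v S) (v Sᶜ)) = 0 := hker _ _ (hPv S) (hPv Sᶜ)
    have hsplit : L.br (X S) (X Sᶜ)
        = L.br (u S) (v Sᶜ) + L.br (v S) (u Sᶜ) + L.br (v S) (v Sᶜ) := by
      have hma : L.br (u S + v S) = L.br (u S) + L.br (v S) := map_add _ _ _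
      have hmb : L.br (u S) (u Sᶜ + v Sᶜ) = L.br (u S) (u Sᶜ) + L.br (u S) (v Sᶜ) :=
        map_add _ _ _
      have hmc : L.br (v S) (u Sᶜ + v Sᶜ) = L.br (v S) (u Sᶜ) + L.br (v S) (v Sᶜ) :=
        map_add _ _ _
      rw [hXuv S, hXuv Sᶜ, hma, LinearMap.add_apply, hmb, hmc, e1]
      abel
    rw [hsplit, map_add, map_add, e4, add_zero]
  have h2 : jacobiator L P D p a + jacobiator L P D p a = 0 := by
    have hsum : jacobiator L P D p a + jacobiator L P D p a
        = (∑ S : Finset (Fin n), Zs 1 c S • P (L.br (u S) (v Sᶜ)))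
          + ∑ S : Finset (Fin n), Zs 1 c S • P (L.br (v S) (u Sᶜ)) := by
      rw [← hA, ← hB]
    rw [hsum]
    calc (∑ S : Finset (Fin n), Zs 1 c S • P (L.br (u S) (v Sᶜ)))
          + ∑ S : Finset (Fin n), Zs 1 c S • P (L.br (v S) (u Sᶜ))
        = ∑ S : Finset (Fin n), Zs 1 c S •
            (P (L.br (u S) (v Sᶜ)) + P (L.br (v S) (u Sᶜ))) := by
          rw [← Finset.sum_add_distrib]
          exact Finset.sum_congr rfl fun S _ => (smul_add _ _ _).symm
      _ = 0 := hC.symm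
  have h2k : (2 : k) • jacobiator L P D p a = 0 := by
    rw [show ((2:k)) = ((2:ℤ):k) by norm_num, Int.cast_smul_eq_zsmul, two_smul]
    exact h2
  rcases smul_eq_zero.mp h2k with h | h
  · exact absurd h (by norm_num)
  · exact h
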